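/- Let k be an algebraically closed field, let A be a d×m integer matrix of rank d, and let D be an (m−d)×m integer matrix whose rows form a ℤ-basis of the lattice {u ∈ ℤ^m : Au = 0}. Grade k[x_1^{±1},…,x_m^{±1}] over ℤ^d by declaring x^u to have degree Au, and let φ : k[z_1^{±1},…,z_{m−d}^{±1}] → k[x_1^{±1},…,x_m^{±1}] be the k-algebra homomorphism with φ(z_i) = ∏_{j=1}^m x_j^{D_{ij}}. Then φ is injective, and every homogeneous ideal I of k[x_1^{±1},…,x_m^{±1}] is generated as an ideal by the set φ(φ^{-1}(I)). -/

import Mathlib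

/-- With `A`, `D`, the grading `deg (x^u) = Au`, and
`φ(z_i) = ∏_j x_j^{D i j}` as in Statement 0: `φ` is injective, and every homogeneous
ideal `I` of `k[x₁^{±1}, …, x_m^{±1}]` is generated as an ideal by `φ(φ⁻¹(I))`. -/
theorem injective_and_homogeneous_ideal_generated_by_preimage
    {k : Type*} [Field k] [IsAlgClosed k]
    (d m : ℕ) (hdm : d ≤ m)
    (A : Matrix (Fin d) (Fin m) ℤ) (hrank : A.rank = d)
    (D : Matrix (Fin (m - d)) (Fin m) ℤ)
    (hDinj : Function.Injective D.vecMulLinear)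
    (hDspan : LinearMap.range D.vecMulLinear = LinearMap.ker A.mulVecLin)
    (I : Ideal (AddMonoidAlgebra k (Fin m → ℤ)))
    (hI : ∃ Gens : Set (AddMonoidAlgebra k (Fin m → ℤ)),
      (∀ f ∈ Gens, ∃ a : Fin d → ℤ, ∀ u ∈ f.coeff.support, A.mulVec u = a) ∧
      I = Ideal.span Gens)
    (φ : AddMonoidAlgebra k (Fin (m - d) → ℤ) →ₐ[k] AddMonoidAlgebra k (Fin m → ℤ))
    (hφ : ∀ v : Fin (m - d) → ℤ,
      φ (AddMonoidAlgebra.single v 1) = AddMonoidAlgebra.single (Matrix.vecMul v D) 1) :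
    Function.Injective φ ∧ I = Ideal.span (⇑φ '' ↑(I.comap φ)) := by
  set F : (Fin (m - d) → ℤ) → (Fin m → ℤ) := ⇑D.vecMulLinear with hF
  have hFapp : ∀ v, F v = Matrix.vecMul v D := fun v => rfl
  -- φ agrees with mapDomain F
  have hφ' : ∀ x, φ x = AddMonoidAlgebra.mapDomain F x := by
    intro x
    induction x using AddMonoidAlgebra.induction_linear with
    | zero => simp
    | add f g hf hg => rw [map_add, AddMonoidAlgebra.mapDomain_add, hf, hg]
    | single v c =>
      have h1 : (AddMonoidAlgebra.single v c : AddMonoidAlgebra k (Fin (m - d) → ℤ))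
          = c • AddMonoidAlgebra.single v 1 := by
        rw [AddMonoidAlgebra.smul_single, smul_eq_mul, mul_one]
      rw [h1, map_smul, hφ, AddMonoidAlgebra.smul_single, AddMonoidAlgebra.smul_single,
        AddMonoidAlgebra.mapDomain_single]
      rfl
  have hinj : Function.Injective φ := by
    intro x y hxy
    exact AddMonoidAlgebra.mapDomain_injective hDinj (by rw [← hφ', ← hφ', hxy])
  refine ⟨hinj, le_antisymm ?_ ?_⟩
  · obtain ⟨Gens, hhom, rfl⟩ := hI
    rw [Ideal.span_le]
    intro f hf
    obtain ⟨a, ha⟩ := hhom f hf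
    by_cases hf0 : f = 0
    · simp [hf0]
    obtain ⟨u₀, hu₀⟩ := Finsupp.support_nonempty_iff.mpr (fun h => hf0 (AddMonoidAlgebra.coeff_injective h))
    set g := AddMonoidAlgebra.of' k (Fin m → ℤ) (-u₀) * f with hg
    have hgI : g ∈ Ideal.span Gens := Ideal.mul_mem_left _ _ (Ideal.subset_span hf)
    have hgsupp : ∀ w ∈ g.coeff.support, ∃ v, F v = w := by
      intro w hw
      have hgw : g.coeff w ≠ 0 := Finsupp.mem_support_iff.mp hw
      have hfw : f.coeff (u₀ + w) ≠ 0 := by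
        rw [hg, AddMonoidAlgebra.of'_apply, AddMonoidAlgebra.coeff_single_mul_apply] at hgw
        simpa using hgw
      have h1 : A.mulVec (u₀ + w) = a := ha _ (Finsupp.mem_support_iff.mpr hfw)
      have h2 : A.mulVec u₀ = a := ha _ hu₀
      have hker : w ∈ LinearMap.ker A.mulVecLin := by
        rw [LinearMap.mem_ker]
        have hadd : A.mulVecLin (u₀ + w) = A.mulVecLin u₀ + A.mulVecLin w := map_add _ _ _
        simp only [Matrix.mulVecLin_apply] at hadd ⊢
        rw [h1, h2] at hadd
        linear_combination (norm := module) -hadd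
      rw [← hDspan] at hker
      exact hker
    set h : AddMonoidAlgebra k (Fin (m - d) → ℤ) := AddMonoidAlgebra.mapDomain (Function.invFun F) g with hh
    have hφh : φ h = g := by
      rw [hφ', hh]
      apply AddMonoidAlgebra.coeff_injective
      simp only [AddMonoidAlgebra.coeff_mapDomain]
      rw [← Finsupp.mapDomain_comp]
      have : Finsupp.mapDomain (M := k) (F ∘ Function.invFun F) g.coeff
          = Finsupp.mapDomain id g.coeff :=
        Finsupp.mapDomain_congr (fun w hw => Function.invFun_eq (hgsupp w hw))
      rw [this, Finsupp.mapDomain_id]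
    have hhI : h ∈ Ideal.comap φ (Ideal.span Gens) := by
      rw [Ideal.mem_comap, hφh]; exact hgI
    have hgspan : g ∈ Ideal.span (⇑φ '' ↑(Ideal.comap φ (Ideal.span Gens))) :=
      Ideal.subset_span ⟨h, hhI, hφh⟩
    have hfg : f = AddMonoidAlgebra.of' k (Fin m → ℤ) u₀ * g := by
      rw [hg, ← mul_assoc, AddMonoidAlgebra.of'_apply, AddMonoidAlgebra.of'_apply,
        AddMonoidAlgebra.single_mul_single]
      simp only [add_neg_cancel, mul_one, ← AddMonoidAlgebra.one_def, one_mul]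
    rw [SetLike.mem_coe, hfg]
    exact Ideal.mul_mem_left _ _ hgspan
  · rw [Ideal.span_le]
    rintro y ⟨x, hx, rfl⟩
    exact hx
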